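/- If y = f_u(x), then for every integer i, (u_i + x_i)(1/u_{i+1} + 1/x_{i+1}) = (u_i + y_i)(1/u_{i+1} + 1/y_{i+1}). -/

import Mathlib

set_option linter.unusedSectionVars false


/- Setting: a semifield `K` (commutative associative addition `add`, multiplicative
abelian group, distributivity), a fixed `u ∈ K^n`, all `n`-tuples extended
`n`-periodically to families indexed by `ℤ`. -/

variable {K : Type*} [CommGroup K]

/-- The nonempty sum `f 0 + f 1 + ⋯ + f r` with respect to the binary operation `add`. -/
def addSum (add : K → K → K) (f : ℕ → K) : ℕ → K
  | 0 => f 0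
  | r + 1 => add (addSum add f r) (f (r + 1))

/-- The element `t_{r,j} = Σ_{k=0}^{r} (∏_{i=1}^{k} x_{j+i}) · (∏_{i=k+1}^{r} u_{j+i})`. -/
def tpoly (add : K → K → K) (u x : ℤ → K) (r : ℕ) (j : ℤ) : K :=
  addSum add
    (fun k => (∏ i ∈ Finset.Icc 1 k, x (j + i)) * ∏ i ∈ Finset.Icc (k + 1) r, u (j + i)) r

open Fin.CommRing in
/-- The `n`-periodic extension of an `n`-tuple to a family indexed by `ℤ`. -/
def extend {n : ℕ} [NeZero n] (v : Fin n → K) : ℤ → K := fun i => v (i : Fin n)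

/-- The map `f_u : K^n → K^n`, sending `x` to the `n`-tuple `y` with
`y_i = u_i · (u_{i-1} t_{n-1,i-1}) / (x_{i+1} t_{n-1,i+1})`. -/
def fu {n : ℕ} [NeZero n] (add : K → K → K) (u : Fin n → K) (x : Fin n → K) : Fin n → K :=
  fun i =>
    u i * (extend u ((i : ℤ) - 1) * tpoly add (extend u) (extend x) (n - 1) ((i : ℤ) - 1)) /
      (extend x ((i : ℤ) + 1) * tpoly add (extend u) (extend x) (n - 1) ((i : ℤ) + 1))

open Fin.CommRing

lemma addSum_congr (add : K → K → K) {f g : ℕ → K} (r : ℕ) (h : ∀ k ≤ r, f k = g k) :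
    addSum add f r = addSum add g r := by
  induction r with
  | zero => simpa [addSum] using h 0 le_rfl
  | succ r ih =>
      simp only [addSum]
      rw [ih (fun k hk => h k (hk.trans (Nat.le_succ r))), h (r+1) le_rfl]

lemma addSum_mul (add : K → K → K) (hdistrib : ∀ a b c : K, a * add b c = add (a * b) (a * c))
    (c : K) (f : ℕ → K) (r : ℕ) :
    c * addSum add f r = addSum add (fun k => c * f k) r := by
  induction r with
  | zero => rfl
  | succ r ih => simp only [addSum, hdistrib, ih]

lemma addSum_succ_front (add : K → K → K)
    (hassoc : ∀ a b c : K, add (add a b) c = add a (add b c)) (f : ℕ → K) (r : ℕ) :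
    addSum add f (r + 1) = add (f 0) (addSum add (fun k => f (k + 1)) r) := by
  induction r with
  | zero => rfl
  | succ r ih =>
      show add (addSum add f (r+1)) (f (r+2)) = _
      rw [ih, hassoc]
      rfl

-- shift products over Icc
lemma prod_Icc_shift (f : ℕ → K) (c a b : ℕ) :
    ∏ i ∈ Finset.Icc (c + a) (c + b), f i = ∏ i ∈ Finset.Icc a b, f (c + i) := by
  rw [← Finset.map_add_left_Icc, Finset.prod_map]
  rfl

/-- `pprod v m j = ∏_{i=1}^{m} v_{j+i}`. -/
def pprod (v : ℤ → K) (m : ℕ) (j : ℤ) : K := ∏ i ∈ Finset.range m, v (j + 1 + i)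

lemma prod_Icc_general (f : ℕ → K) (a b : ℕ) :
    ∏ i ∈ Finset.Icc a b, f i = ∏ i ∈ Finset.range (b + 1 - a), f (a + i) := by
  rw [← Finset.Ico_add_one_right_eq_Icc, Finset.prod_Ico_eq_prod_range]

lemma tpoly_eq (add : K → K → K) (u x : ℤ → K) (r : ℕ) (j : ℤ) :
    tpoly add u x r j
      = addSum add (fun k => pprod x k j * pprod u (r - k) (j + k)) r := by
  unfold tpoly
  apply addSum_congr add r
  intro k hk
  rw [prod_Icc_general, prod_Icc_general]
  congr 1
  · rw [show k + 1 - 1 = k by omega]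
    apply Finset.prod_congr rfl
    intro i _
    congr 1
    push_cast
    ring
  · rw [show r + 1 - (k + 1) = r - k by omega]
    apply Finset.prod_congr rfl
    intro i _
    congr 1
    push_cast
    ring

lemma pprod_succ_top (v : ℤ → K) (m : ℕ) (j : ℤ) :
    pprod v (m + 1) j = pprod v m j * v (j + 1 + m) :=
  Finset.prod_range_succ _ m

lemma pprod_succ_front (v : ℤ → K) (m : ℕ) (j : ℤ) :
    pprod v (m + 1) j = v (j + 1) * pprod v m (j + 1) := by
  unfold pprod
  rw [Finset.prod_range_succ']
  rw [mul_comm]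
  congr 1
  · push_cast; simp
  apply Finset.prod_congr rfl
  intro i _
  congr 1
  push_cast
  ring

lemma pprod_zero (v : ℤ → K) (j : ℤ) : pprod v 0 j = 1 := rfl

lemma tpoly_zero (add : K → K → K) (u x : ℤ → K) (j : ℤ) : tpoly add u x 0 j = 1 := by
  rw [tpoly_eq]
  show pprod x 0 j * pprod u 0 j = 1
  simp [pprod_zero]

/-- Recurrence (B): split off the top term. -/
lemma tpoly_rec_top (add : K → K → K)
    (hdistrib : ∀ a b c : K, a * add b c = add (a * b) (a * c))
    (u x : ℤ → K) (r : ℕ) (j : ℤ) :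
    tpoly add u x (r + 1) j
      = add (u (j + 1 + r) * tpoly add u x r j) (pprod x (r + 1) j) := by
  rw [tpoly_eq]
  show add (addSum add _ r) _ = _
  congr 1
  · rw [tpoly_eq, addSum_mul add hdistrib]
    apply addSum_congr add r
    intro k hk
    rw [show r + 1 - k = (r - k) + 1 by omega, pprod_succ_top]
    rw [show j + (k : ℤ) + 1 + ((r - k : ℕ) : ℤ) = j + 1 + r by push_cast [hk]; ring]
    rw [← mul_assoc, mul_comm]
  · simp only [Nat.sub_self, pprod_zero, mul_one]

/-- Recurrence (A): split off the bottom term. -/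
lemma tpoly_rec_front (add : K → K → K)
    (hadd_assoc : ∀ a b c : K, add (add a b) c = add a (add b c))
    (hdistrib : ∀ a b c : K, a * add b c = add (a * b) (a * c))
    (u x : ℤ → K) (r : ℕ) (j : ℤ) :
    tpoly add u x (r + 1) j
      = add (pprod u (r + 1) j) (x (j + 1) * tpoly add u x r (j + 1)) := by
  rw [tpoly_eq, addSum_succ_front add hadd_assoc]
  congr 1
  · simp [pprod_zero]
  · rw [tpoly_eq, addSum_mul add hdistrib]
    apply addSum_congr add r
    intro k hk
    show pprod x (k + 1) j * pprod u (r + 1 - (k + 1)) (j + ((k + 1 : ℕ) : ℤ))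
      = x (j + 1) * (pprod x k (j + 1) * pprod u (r - k) (j + 1 + (k : ℤ)))
    rw [pprod_succ_front, show r + 1 - (k + 1) = r - k by omega,
      show j + ((k + 1 : ℕ) : ℤ) = j + 1 + (k : ℤ) by push_cast; ring]
    exact mul_assoc _ _ _

section Periodic

variable {n : ℕ} [NeZero n]

lemma extend_congr (v : Fin n → K) {a b : ℤ} (h : ((a : ℤ) : Fin n) = ((b : ℤ) : Fin n)) :
    extend v a = extend v b := by
  unfold extend; rw [h]

lemma intCast_add_self (a : ℤ) : (((a + (n : ℤ)) : ℤ) : Fin n) = ((a : ℤ) : Fin n) := by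
  push_cast
  simp

lemma extend_add_n (v : Fin n → K) (a : ℤ) : extend v (a + (n : ℤ)) = extend v a :=
  extend_congr v (intCast_add_self a)

lemma tpoly_extend_congr (add : K → K → K) (u x : Fin n → K) (r : ℕ) {a b : ℤ}
    (h : ((a : ℤ) : Fin n) = ((b : ℤ) : Fin n)) :
    tpoly add (extend u) (extend x) r a = tpoly add (extend u) (extend x) r b := by
  unfold tpoly
  apply addSum_congr add r
  intro k _
  congr 1 <;>
  · apply Finset.prod_congr rfl
    intro i _
    apply extend_congr
    push_cast
    rw [h]

lemma shiftprod (v : Fin n → K) (j : ℤ) :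
    ∏ i ∈ Finset.range n, extend v (j + 1 + (i : ℤ)) = ∏ i ∈ Finset.range n, extend v (j + (i : ℤ)) := by
  have h1 := Finset.prod_range_succ (fun i : ℕ => extend v (j + (i : ℤ))) n
  have h2 := Finset.prod_range_succ' (fun i : ℕ => extend v (j + (i : ℤ))) n
  rw [h1] at h2
  rw [extend_add_n, Nat.cast_zero, add_zero] at h2
  have h3 := mul_right_cancel h2.symm
  rw [← h3]
  apply Finset.prod_congr rfl
  intro i _
  apply extend_congr
  push_cast
  ring_nf

lemma fullprod (v : Fin n → K) (m : ℕ) (hm : m + 1 = n) (j : ℤ) :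
    extend v j * pprod (extend v) m j = ∏ i ∈ Finset.range n, extend v (j + (i : ℤ)) := by
  calc extend v j * pprod (extend v) m j
      = (∏ i ∈ Finset.range m, extend v (j + ((i + 1 : ℕ) : ℤ))) * extend v (j + ((0 : ℕ) : ℤ)) := by
        rw [mul_comm]
        congr 1
        · apply Finset.prod_congr rfl
          intro i _
          apply extend_congr
          push_cast
          ring_nf
        · rw [Nat.cast_zero, add_zero]
    _ = ∏ i ∈ Finset.range (m + 1), extend v (j + (i : ℤ)) :=
        (Finset.prod_range_succ' (fun i : ℕ => extend v (j + (i : ℤ))) m).symm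
    _ = ∏ i ∈ Finset.range n, extend v (j + (i : ℤ)) := by rw [hm]

lemma pprod_period (v : Fin n → K) (m : ℕ) (hm : m + 1 = n) (j : ℤ) :
    extend v j * pprod (extend v) m j = extend v (j + 1) * pprod (extend v) m (j + 1) := by
  rw [fullprod v m hm, fullprod v m hm, ← shiftprod v j]

end Periodic

lemma keyL {n : ℕ} [NeZero n] (add : K → K → K)
    (hassoc : ∀ a b c : K, add (add a b) c = add a (add b c))
    (hcomm : ∀ a b : K, add a b = add b a)
    (hd : ∀ a b c : K, a * add b c = add (a * b) (a * c))
    (u x : Fin n → K) (j : ℤ) :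
    add (extend x (j+1) * tpoly add (extend u) (extend x) (n-1) (j+1))
        (extend u (j-1) * tpoly add (extend u) (extend x) (n-1) (j-1))
      = add (extend u j) (extend x j) * tpoly add (extend u) (extend x) (n-1) j := by
  have hd' : ∀ a b c : K, add a b * c = add (a * c) (b * c) := fun a b c => by
    rw [mul_comm, hd, mul_comm c a, mul_comm c b]
  have hswap : ∀ p q r : K, add p (add q r) = add q (add p r) := fun p q r => by
    rw [← hassoc, hcomm p q, hassoc]
  have hinter : ∀ a b c d : K, add (add a b) (add c d) = add (add c a) (add d b) :=
    fun a b c d => by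
      rw [hcomm (add a b) (add c d), hassoc, hswap d a b, ← hassoc]
  obtain ⟨m, rfl⟩ : ∃ m, n = m + 1 := ⟨n - 1, by have := NeZero.ne n; omega⟩
  cases m with
  | zero =>
      simp only [Nat.add_sub_cancel, tpoly_zero, mul_one]
      have h1 : extend x (j + 1) = extend x j :=
        extend_congr x (by push_cast; simp)
      have h2 : extend u (j - 1) = extend u j :=
        extend_congr u (by push_cast; exact Subsingleton.elim _ _)
      rw [h1, h2, hcomm]
  | succ m =>
      simp only [Nat.add_sub_cancel]
      have eA : ∀ a : ℤ, tpoly add (extend u) (extend x) (m + 1) a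
          = add (pprod (extend u) (m + 1) a)
              (extend x (a + 1) * tpoly add (extend u) (extend x) m (a + 1)) :=
        fun a => tpoly_rec_front add hassoc hd (extend u) (extend x) m a
      have eB : ∀ a : ℤ, tpoly add (extend u) (extend x) (m + 1) a
          = add (extend u (a + 1 + (m : ℤ)) * tpoly add (extend u) (extend x) m a)
              (pprod (extend x) (m + 1) a) :=
        fun a => tpoly_rec_top add hd (extend u) (extend x) m a
      have hu0 : extend u (j + 1 + 1 + (m : ℤ)) = extend u j := by
        rw [show j + 1 + 1 + (m : ℤ) = j + ((m + 2 : ℕ) : ℤ) by push_cast; ring]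
        exact extend_add_n u j
      have hu1 : extend u (j + 1 + (m : ℤ)) = extend u (j - 1) := by
        rw [show j + 1 + (m : ℤ) = (j - 1) + ((m + 2 : ℕ) : ℤ) by push_cast; ring]
        exact extend_add_n u (j - 1)
      calc add (extend x (j+1) * tpoly add (extend u) (extend x) (m+1) (j+1))
              (extend u (j-1) * tpoly add (extend u) (extend x) (m+1) (j-1))
          = add
              (add (extend x (j+1) * (extend u j * tpoly add (extend u) (extend x) m (j+1)))
                   (extend x (j+1) * pprod (extend x) (m+1) (j+1)))
              (add (extend u (j-1) * pprod (extend u) (m+1) (j-1))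
                   (extend u (j-1) * (extend x j * tpoly add (extend u) (extend x) m j))) := by
            rw [eB (j+1), eA (j-1), show j - 1 + 1 = j by ring, hu0, hd, hd]
        _ = add
              (add (extend u (j-1) * pprod (extend u) (m+1) (j-1))
                   (extend x (j+1) * (extend u j * tpoly add (extend u) (extend x) m (j+1))))
              (add (extend u (j-1) * (extend x j * tpoly add (extend u) (extend x) m j))
                   (extend x (j+1) * pprod (extend x) (m+1) (j+1))) := hinter _ _ _ _
        _ = add
              (add (extend u j * pprod (extend u) (m+1) j)
                   (extend u j * (extend x (j+1) * tpoly add (extend u) (extend x) m (j+1))))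
              (add (extend x j * (extend u (j-1) * tpoly add (extend u) (extend x) m j))
                   (extend x j * pprod (extend x) (m+1) j)) := by
            congr 1
            · congr 1
              · rw [pprod_period u (m+1) rfl (j-1), show j - 1 + 1 = j by ring]
              · rw [mul_left_comm]
            · congr 1
              · rw [mul_left_comm]
              · rw [pprod_period x (m+1) rfl j]
        _ = add (extend u j) (extend x j) * tpoly add (extend u) (extend x) (m+1) j := by
            rw [hd']
            nth_rewrite 2 [eB j]
            nth_rewrite 1 [eA j]
            rw [hu1, hd, hd]

lemma extend_fu {n : ℕ} [NeZero n] (add : K → K → K) (u x : Fin n → K) (i : ℤ) :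
    extend (fu add u x) i
      = extend u i * (extend u (i-1) * tpoly add (extend u) (extend x) (n-1) (i-1)) /
          (extend x (i+1) * tpoly add (extend u) (extend x) (n-1) (i+1)) := by
  show fu add u x ((i : ℤ) : Fin n) = _
  unfold fu
  have key : (((((i : ℤ) : Fin n) : ℤ)) : Fin n) = ((i : ℤ) : Fin n) := by
    push_cast
    simp
  have h1 : extend u ((((i : ℤ) : Fin n) : ℤ) - 1) = extend u (i - 1) :=
    extend_congr u (by push_cast [key]; rfl)
  have h2 : extend x ((((i : ℤ) : Fin n) : ℤ) + 1) = extend x (i + 1) :=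
    extend_congr x (by push_cast [key]; rfl)
  have h3 : tpoly add (extend u) (extend x) (n-1) ((((i : ℤ) : Fin n) : ℤ) - 1)
      = tpoly add (extend u) (extend x) (n-1) (i - 1) :=
    tpoly_extend_congr add u x (n-1) (by push_cast [key]; rfl)
  have h4 : tpoly add (extend u) (extend x) (n-1) ((((i : ℤ) : Fin n) : ℤ) + 1)
      = tpoly add (extend u) (extend x) (n-1) (i + 1) :=
    tpoly_extend_congr add u x (n-1) (by push_cast [key]; rfl)
  rw [h1, h2, h3, h4]
  rfl

lemma addDivAux (add : K → K → K)
    (hd : ∀ a b c : K, a * add b c = add (a * b) (a * c)) (a b c : K) :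
    add (a / c) (b / c) = add a b / c := by
  rw [div_eq_mul_inv, div_eq_mul_inv, div_eq_mul_inv, mul_comm a, mul_comm b,
    mul_comm (add a b), hd]


/-- Theorem: if `y = f_u(x)`, then for every integer `i`,
`(u_i + x_i)(1/u_{i+1} + 1/x_{i+1}) = (u_i + y_i)(1/u_{i+1} + 1/y_{i+1})`. -/
theorem fu_local_invariant (n : ℕ) [NeZero n] (add : K → K → K)
    (hadd_assoc : ∀ a b c : K, add (add a b) c = add a (add b c))
    (hadd_comm : ∀ a b : K, add a b = add b a)
    (hdistrib : ∀ a b c : K, a * add b c = add (a * b) (a * c))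
    (u : Fin n → K)
    (x y : Fin n → K) (hy : y = fu add u x) (i : ℤ) :
    add (extend u i) (extend x i) * add (extend u (i + 1))⁻¹ (extend x (i + 1))⁻¹ =
      add (extend u i) (extend y i) * add (extend u (i + 1))⁻¹ (extend y (i + 1))⁻¹ := by
  subst hy
  have hyi := extend_fu add u x i
  have hyi1 := extend_fu add u x (i+1)
  rw [show i+1-1 = i by ring, show i+1+1 = i+2 by ring] at hyi1
  have hL0 := keyL add hadd_assoc hadd_comm hdistrib u x i
  have hL1 := keyL add hadd_assoc hadd_comm hdistrib u x (i+1)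
  rw [show i+1+1 = i+2 by ring, show i+1-1 = i by ring] at hL1
  set t : ℤ → K := tpoly add (extend u) (extend x) (n-1) with ht
  set U0 := extend u i
  set X0 := extend x i
  set U1 := extend u (i+1)
  set X1 := extend x (i+1)
  set X2 := extend x (i+2)
  set Um1 := extend u (i-1)
  have e1 : add U0 (extend (fu add u x) i) = U0 * (add U0 X0 * t i) / (X1 * t (i+1)) := by
    rw [hyi]
    calc add U0 (U0 * (Um1 * t (i-1)) / (X1 * t (i+1)))
        = add (U0 * (X1 * t (i+1)) / (X1 * t (i+1))) (U0 * (Um1 * t (i-1)) / (X1 * t (i+1))) := by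
          rw [mul_div_cancel_right]
      _ = add (U0 * (X1 * t (i+1))) (U0 * (Um1 * t (i-1))) / (X1 * t (i+1)) :=
          addDivAux add hdistrib _ _ _
      _ = U0 * add (X1 * t (i+1)) (Um1 * t (i-1)) / (X1 * t (i+1)) := by rw [hdistrib]
      _ = U0 * (add U0 X0 * t i) / (X1 * t (i+1)) := by rw [hL0]
  have e2 : add U1⁻¹ (extend (fu add u x) (i+1))⁻¹ = (add U1 X1 * t (i+1)) / (U1 * (U0 * t i)) := by
    rw [hyi1, inv_div]
    calc add U1⁻¹ ((X2 * t (i+2)) / (U1 * (U0 * t i)))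
        = add ((U0 * t i) / (U1 * (U0 * t i))) ((X2 * t (i+2)) / (U1 * (U0 * t i))) := by
          congr 1
          rw [mul_comm U1 (U0 * t i), ← div_div, div_self', one_div]
      _ = add (U0 * t i) (X2 * t (i+2)) / (U1 * (U0 * t i)) := addDivAux add hdistrib _ _ _
      _ = add (X2 * t (i+2)) (U0 * t i) / (U1 * (U0 * t i)) := by rw [hadd_comm]
      _ = (add U1 X1 * t (i+1)) / (U1 * (U0 * t i)) := by rw [hL1]
  have e3 : add U1⁻¹ X1⁻¹ = add U1 X1 / (U1 * X1) := by
    calc add U1⁻¹ X1⁻¹ = add (X1 / (U1 * X1)) (U1 / (U1 * X1)) := by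
          congr 1
          · rw [mul_comm U1 X1, ← div_div, div_self', one_div]
          · rw [← div_div, div_self', one_div]
      _ = add X1 U1 / (U1 * X1) := addDivAux add hdistrib _ _ _
      _ = add U1 X1 / (U1 * X1) := by rw [hadd_comm]
  rw [e1, e2, e3, div_mul_div_comm, mul_div_assoc', div_eq_div_iff_mul_eq_mul]
  simp only [mul_comm, mul_left_comm, mul_assoc]
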